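/- Let Φ be a based root system (possibly infinite) and let (Φ, α ↦ −α, d) be an OMRS on (Φ, Φ⁺). Then for every w ∈ W, the set w·Φ⁺ is a tope of (Φ, α ↦ −α, d). In particular, Φ⁺ itself is a tope of every OMRS on (Φ, Φ⁺). -/

import Mathlib

open Set Pointwise

variable {V : Type*} [AddCommGroup V] [Module ℝ V]

/-- `cone X` is the set of all finite nonnegative linear combinations of elements of `X`. -/
def cone (X : Set V) : Set V :=
  {v | ∃ (n : ℕ) (c : Fin n → ℝ) (x : Fin n → V),
    (∀ i, 0 ≤ c i) ∧ (∀ i, x i ∈ X) ∧ v = ∑ i, c i • x i}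

/-- An oriented matroid structure on the ground set `E ⊆ V`, with involution `x ↦ -x`
and closure operator `d` (only its values on subsets of `E` are relevant). -/
structure IsOrientedMatroidOn (E : Set V) (d : Set V → Set V) : Prop where
  neg_mem : ∀ x ∈ E, -x ∈ E
  neg_ne : ∀ x ∈ E, -x ≠ x
  cx_le_ground : ∀ X, X ⊆ E → d X ⊆ E
  le_cx : ∀ X, X ⊆ E → X ⊆ d X
  cx_mono : ∀ X Y : Set V, X ⊆ Y → Y ⊆ E → d X ⊆ d Y
  cx_idem : ∀ X, X ⊆ E → d (d X) = d X
  cx_neg : ∀ X, X ⊆ E → d (-X) = -(d X)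
  exchange2 : ∀ X, X ⊆ E → ∀ x ∈ E, x ∈ d (X ∪ {-x}) → x ∈ d X
  exchange3 : ∀ X, X ⊆ E → ∀ x ∈ E, ∀ y ∈ E,
    x ∈ d (X ∪ {-y}) → x ∉ d X → y ∈ d ((X \ {y}) ∪ {-x})
  finitary : ∀ X, X ⊆ E → ∀ x ∈ d X, ∃ Y, Y ⊆ X ∧ Y.Finite ∧ x ∈ d Y

/-- The oriented matroid is reduced: `d ∅ = ∅` and `d {x} = {x}` for `x ∈ E`. -/
def IsReducedOn (E : Set V) (d : Set V → Set V) : Prop :=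
  d ∅ = ∅ ∧ ∀ x ∈ E, d {x} = {x}

/-- A tope: a maximal `d`-closed asymmetric subset of `E`. -/
def IsTope (E : Set V) (d : Set V → Set V) (R : Set V) : Prop :=
  R ⊆ E ∧ d R ⊆ R ∧ (∀ x ∈ R, -x ∉ R) ∧
    ∀ R' : Set V, R' ⊆ E → d R' ⊆ R' → (∀ x ∈ R', -x ∉ R') → R ⊆ R' → R' = R

/-- The simple reflections `s_α : v ↦ v - 2B(v,α)α` for `α ∈ Δ`. -/
def simpleReflections (B : LinearMap.BilinForm ℝ V) (Δ : Set V) : Set (V ≃ₗ[ℝ] V) :=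
  {g | ∃ α ∈ Δ, ∀ v : V, g v = v - (2 * B v α) • α}

/-- The Weyl group generated by the simple reflections. -/
def weylGroup (B : LinearMap.BilinForm ℝ V) (Δ : Set V) : Subgroup (V ≃ₗ[ℝ] V) :=
  Subgroup.closure (simpleReflections B Δ)

/-- The root system `Φ = W·Δ`. -/
def rootSystem (B : LinearMap.BilinForm ℝ V) (Δ : Set V) : Set V :=
  {v | ∃ w ∈ weylGroup B Δ, ∃ α ∈ Δ, v = w α}

/-- The positive roots `Φ⁺ = Φ ∩ cone(Δ)`. -/
def positiveRoots (B : LinearMap.BilinForm ℝ V) (Δ : Set V) : Set V :=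
  rootSystem B Δ ∩ cone Δ

/-- A based root system with simple roots `Δ` and symmetric bilinear form `B`. -/
structure IsBasedRootSystem (B : LinearMap.BilinForm ℝ V) (Δ : Set V) : Prop where
  finite : Δ.Finite
  indep : LinearIndependent ℝ ((↑) : Δ → V)
  symm : ∀ u v : V, B u v = B v u
  diag_one : ∀ α ∈ Δ, B α α = 1
  offdiag : ∀ α ∈ Δ, ∀ β ∈ Δ, α ≠ β →
    (∃ m : ℕ, 2 ≤ m ∧ B α β = -Real.cos (Real.pi / (m : ℝ))) ∨ B α β ≤ -1

/-- An oriented matroid root system (OMRS) on `(Φ, Φ⁺)`. -/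
structure IsOMRS (B : LinearMap.BilinForm ℝ V) (Δ : Set V) (d : Set V → Set V) : Prop where
  om : IsOrientedMatroidOn (rootSystem B Δ) d
  reduced : IsReducedOn (rootSystem B Δ) d
  equivariant : ∀ w ∈ weylGroup B Δ, ∀ X, X ⊆ rootSystem B Δ → d (⇑w '' X) = ⇑w '' d X
  positive_closed : d (positiveRoots B Δ) = positiveRoots B Δ
  rank_two : ∀ X, X ⊆ rootSystem B Δ →
    Module.rank ℝ ↥(Submodule.span ℝ X) ≤ 2 → d X = cone X ∩ rootSystem B Δ

/-- `A` is `c₂`-closed in `P`. -/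
def C2Closed (P A : Set V) : Prop :=
  ∀ α ∈ A, ∀ β ∈ A, ∀ γ ∈ P, γ ∈ cone {α, β} → γ ∈ A

/-- `A` is `c₂`-biclosed in `P`. -/
def C2Biclosed (P A : Set V) : Prop :=
  C2Closed P A ∧ C2Closed P (P \ A)

/-- A root system is clean if every `c₂`-biclosed set of positive roots gives a tope of
the RRS oriented matroid `(Φ, -, cone_Φ)`. -/
def IsClean (B : LinearMap.BilinForm ℝ V) (Δ : Set V) : Prop :=
  ∀ A, A ⊆ positiveRoots B Δ → C2Biclosed (positiveRoots B Δ) A →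
    IsTope (rootSystem B Δ) (fun X => cone X ∩ rootSystem B Δ)
      (A ∪ (-(positiveRoots B Δ \ A)))

namespace OMRSAux

variable {G : Type*} [Group G]

/-- Word length w.r.t. a generating set. -/
noncomputable def wlen (S : Set G) (w : G) : ℕ :=
  sInf {n | ∃ l : List G, (∀ x ∈ l, x ∈ S) ∧ l.prod = w ∧ l.length = n}

theorem wlen_le {S : Set G} {w : G} {l : List G} (hl : ∀ x ∈ l, x ∈ S) (hp : l.prod = w) :
    wlen S w ≤ l.length := Nat.sInf_le ⟨l, hl, hp, rfl⟩

theorem reverse_prod {S : Set G} (hS : ∀ s ∈ S, s * s = 1) :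
    ∀ l : List G, (∀ x ∈ l, x ∈ S) → l.reverse.prod = l.prod⁻¹ := by
  intro l
  induction l with
  | nil => simp
  | cons a t ih =>
    intro h
    have ha : a * a = 1 := hS a (h a (by simp))
    have hainv : a⁻¹ = a := by
      calc a⁻¹ = a⁻¹ * (a * a) := by rw [ha, mul_one]
        _ = a := by group
    simp only [List.reverse_cons, List.prod_append, List.prod_cons, List.prod_nil, mul_one,
      mul_inv_rev, hainv, ih (fun x hx => h x (by simp [hx]))]

theorem exists_word (S : Set G) (hS : ∀ s ∈ S, s * s = 1) {w : G}
    (hw : w ∈ Subgroup.closure S) : ∃ l : List G, (∀ x ∈ l, x ∈ S) ∧ l.prod = w := by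
  induction hw using Subgroup.closure_induction with
  | mem x hx => exact ⟨[x], by simpa using hx, by simp⟩
  | one => exact ⟨[], by simp, by simp⟩
  | mul x y hx hy ihx ihy =>
    obtain ⟨l1, h1, p1⟩ := ihx; obtain ⟨l2, h2, p2⟩ := ihy
    refine ⟨l1 ++ l2, ?_, by simp [p1, p2]⟩
    intro x hx
    rcases List.mem_append.1 hx with h | h
    exacts [h1 x h, h2 x h]
  | inv x hx ih =>
    obtain ⟨l, h, p⟩ := ih
    exact ⟨l.reverse, fun x hx => h x (List.mem_reverse.1 hx),
      by rw [reverse_prod hS l h, p]⟩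

theorem exists_min_word (S : Set G) (hS : ∀ s ∈ S, s * s = 1) {w : G}
    (hw : w ∈ Subgroup.closure S) :
    ∃ l : List G, (∀ x ∈ l, x ∈ S) ∧ l.prod = w ∧ l.length = wlen S w := by
  have hne : {n | ∃ l : List G, (∀ x ∈ l, x ∈ S) ∧ l.prod = w ∧ l.length = n}.Nonempty := by
    obtain ⟨l, h, p⟩ := exists_word S hS hw; exact ⟨l.length, l, h, p, rfl⟩
  exact Nat.sInf_mem hne

theorem wlen_one (S : Set G) : wlen S 1 = 0 :=
  Nat.le_zero.1 (wlen_le (l := []) (by simp) (by simp))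

theorem eq_one_of_wlen_zero (S : Set G) (hS : ∀ s ∈ S, s * s = 1) {w : G}
    (hw : w ∈ Subgroup.closure S) (h0 : wlen S w = 0) : w = 1 := by
  obtain ⟨l, hl, hp, hlen⟩ := exists_min_word S hS hw
  rw [h0, List.length_eq_zero_iff] at hlen
  simpa [hlen] using hp.symm

theorem wlen_mul_le (S : Set G) (hS : ∀ s ∈ S, s * s = 1) {w : G}
    (hw : w ∈ Subgroup.closure S) {s : G} (hs : s ∈ S) :
    wlen S (w * s) ≤ wlen S w + 1 := by
  obtain ⟨l, hl, hp, hlen⟩ := exists_min_word S hS hw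
  have := wlen_le (S := S) (w := w * s) (l := l ++ [s])
    (by intro x hx; rcases List.mem_append.1 hx with h | h;
        exacts [hl x h, by simpa using (by simpa using h : x = s) ▸ hs])
    (by simp [hp])
  simpa [hlen] using this

theorem wlen_smul_le (S : Set G) (hS : ∀ s ∈ S, s * s = 1) {w : G}
    (hw : w ∈ Subgroup.closure S) {s : G} (hs : s ∈ S) :
    wlen S (s * w) ≤ wlen S w + 1 := by
  obtain ⟨l, hl, hp, hlen⟩ := exists_min_word S hS hw
  have := wlen_le (S := S) (w := s * w) (l := s :: l)
    (by intro x hx; rcases List.mem_cons.1 hx with h | h;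
        exacts [h ▸ hs, hl x h]) (by simp [hp])
  simpa [hlen] using this

theorem wlen_le_mul_add (S : Set G) (hS : ∀ s ∈ S, s * s = 1) {w : G}
    (hw : w ∈ Subgroup.closure S) {s : G} (hs : s ∈ S) :
    wlen S w ≤ wlen S (w * s) + 1 := by
  have hws : w * s ∈ Subgroup.closure S := by
    exact mul_mem hw (Subgroup.subset_closure hs)
  have := wlen_mul_le S hS hws hs
  rwa [mul_assoc, hS s hs, mul_one] at this

/-- Concatenation bound: if `t` is a product over a subset `I ⊆ S`. -/
theorem wlen_mul_le_add {S I : Set G} (hIS : I ⊆ S) (hS : ∀ s ∈ S, s * s = 1)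
    {v t : G} (hv : v ∈ Subgroup.closure S) (ht : t ∈ Subgroup.closure I) :
    wlen S (v * t) ≤ wlen S v + wlen I t := by
  obtain ⟨l1, h1, p1, q1⟩ := exists_min_word S hS hv
  obtain ⟨l2, h2, p2, q2⟩ := exists_min_word I (fun s hs => hS s (hIS hs)) ht
  have := wlen_le (S := S) (w := v * t) (l := l1 ++ l2)
    (by intro x hx; rcases List.mem_append.1 hx with h | h;
        exacts [h1 x h, hIS (h2 x h)]) (by simp [p1, p2])
  simpa [q1, q2] using this

/-- Parity via a character `ε` with `ε s = -1` on generators. -/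
theorem eps_eq_pow {R : Type*} [Monoid R] [HasDistribNeg R] (ε : G →* R) {S : Set G}
    (hε : ∀ s ∈ S, ε s = -1) {l : List G} (hl : ∀ x ∈ l, x ∈ S) :
    ε l.prod = (-1) ^ l.length := by
  induction l with
  | nil => simp
  | cons a t ih =>
    simp only [List.prod_cons, map_mul, hε a (hl a (by simp)),
      ih (fun x hx => hl x (by simp [hx])), List.length_cons, pow_succ,
      neg_one_mul, mul_neg_one, mul_one, one_mul]

theorem eps_wlen {R : Type*} [Monoid R] [HasDistribNeg R] (ε : G →* R) {S : Set G}
    (hS : ∀ s ∈ S, s * s = 1) (hε : ∀ s ∈ S, ε s = -1) {w : G}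
    (hw : w ∈ Subgroup.closure S) : ε w = (-1) ^ (wlen S w) := by
  obtain ⟨l, hl, hp, hlen⟩ := exists_min_word S hS hw
  rw [← hlen]
  calc ε w = ε l.prod := by rw [hp]
    _ = (-1) ^ l.length := eps_eq_pow ε hε hl

theorem wlen_mul_ne (ε : G →* ℝˣ) {S : Set G}
    (hS : ∀ s ∈ S, s * s = 1) (hε : ∀ s ∈ S, ε s = -1) {w : G}
    (hw : w ∈ Subgroup.closure S) {s : G} (hs : s ∈ S) :
    wlen S (w * s) ≠ wlen S w := by
  intro h
  have h1 : ε (w * s) = (-1) ^ wlen S (w * s) :=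
    eps_wlen ε hS hε (mul_mem hw (Subgroup.subset_closure hs))
  have h2 : ε w = (-1) ^ wlen S w := eps_wlen ε hS hε hw
  rw [map_mul, hε s hs, h, h2] at h1
  have h3 : ((-1 : ℝˣ) ^ wlen S w) * (-1) = ((-1 : ℝˣ) ^ wlen S w) * 1 := by
    rw [mul_one]; exact h1
  have h4 : (-1 : ℝˣ) = 1 := mul_left_cancel h3
  have : ((-1 : ℝˣ) : ℝ) = ((1 : ℝˣ) : ℝ) := by rw [h4]
  norm_num at this

variable {V : Type*} [AddCommGroup V] [Module ℝ V]

/-- The reflection in `α`, assuming `B α α = 1`. -/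
noncomputable def bref (B : LinearMap.BilinForm ℝ V) (α : V) (hα : B α α = 1) : V ≃ₗ[ℝ] V := by
  refine LinearEquiv.ofLinear (LinearMap.id - (B.flip α).smulRight ((2:ℝ) • α))
    (LinearMap.id - (B.flip α).smulRight ((2:ℝ) • α)) ?_ ?_ <;>
  · ext v
    have hflip : ∀ x : V, B.flip α x = B x α := fun x => rfl
    simp only [LinearMap.coe_comp, Function.comp_apply, LinearMap.sub_apply, LinearMap.id_apply,
      LinearMap.smulRight_apply, hflip, map_sub, map_smul, LinearMap.sub_apply,
      smul_eq_mul, LinearMap.smul_apply, hα, Module.End.one_apply]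
    module

theorem bref_apply (B : LinearMap.BilinForm ℝ V) (α : V) (hα : B α α = 1) (v : V) :
    bref B α hα v = v - (2 * B v α) • α := by
  have hflip : ∀ x : V, B.flip α x = B x α := fun x => rfl
  simp only [bref, LinearEquiv.ofLinear_apply, LinearMap.sub_apply, LinearMap.id_apply,
    LinearMap.smulRight_apply, hflip]
  module

theorem bref_sq (B : LinearMap.BilinForm ℝ V) (α : V) (hα : B α α = 1) :
    bref B α hα * bref B α hα = 1 := by
  ext v
  show bref B α hα (bref B α hα v) = v
  rw [bref_apply, bref_apply]
  have h1 : B (v - (2 * B v α) • α) α = - B v α := by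
    simp only [map_sub, LinearMap.sub_apply, map_smul, LinearMap.smul_apply, smul_eq_mul, hα]
    ring
  rw [h1]
  module

theorem bref_apply_self (B : LinearMap.BilinForm ℝ V) (α : V) (hα : B α α = 1) :
    bref B α hα α = -α := by
  rw [bref_apply, hα]; module

/-- Determinant of a reflection map is `-1`. -/
theorem det_of_reflection [FiniteDimensional ℝ V] (B : LinearMap.BilinForm ℝ V) (α : V)
    (hα : B α α = 1) (g : V ≃ₗ[ℝ] V) (hg : ∀ v, g v = v - (2 * B v α) • α) :
    LinearEquiv.det g = -1 := by
  classical
  set bV := Module.finBasis ℝ V with hbV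
  set n := Module.finrank ℝ V
  set u : Fin n → ℝ := fun i => bV.repr α i with hu
  set vv : Fin n → ℝ := fun j => -(2 * B (bV j) α) with hvv
  have key : ∀ x : V, B x α = ∑ j, bV.repr x j * B (bV j) α := by
    intro x
    conv_lhs => rw [← bV.sum_repr x]
    simp only [map_sum, LinearMap.sum_apply, map_smul, LinearMap.smul_apply, smul_eq_mul]
  have hM : LinearMap.toMatrix bV bV (g : V →ₗ[ℝ] V) = 1 + Matrix.replicateCol Unit u * Matrix.replicateRow Unit vv := by
    ext i j
    rw [LinearMap.toMatrix_apply]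
    have hgj : (g : V →ₗ[ℝ] V) (bV j) = bV j + (-(2 * B (bV j) α)) • α := by
      simp only [LinearEquiv.coe_coe, hg (bV j)]; module
    rw [hgj, map_add, map_smul]
    simp [Matrix.one_apply, Matrix.mul_apply, Matrix.replicateCol, Matrix.replicateRow, hu, hvv,
      Module.Basis.repr_self, Finsupp.single_apply, eq_comm]
    ring_nf
  have hdet : LinearMap.det (g : V →ₗ[ℝ] V) = -1 := by
    rw [← LinearMap.det_toMatrix bV, hM, Matrix.det_one_add_replicateCol_mul_replicateRow]
    have hdot : dotProduct vv u = -2 := by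
      simp only [dotProduct, hvv, hu]
      have h2 : ∑ j, -(2 * B (bV j) α) * bV.repr α j = -2 * ∑ j, bV.repr α j * B (bV j) α := by
        rw [Finset.mul_sum]; congr 1; ext j; ring
      rw [h2, ← key α, hα]; ring
    rw [hdot]; norm_num
  have hc := LinearEquiv.coe_det g
  ext
  rw [hc, hdet]
  norm_num

/-! ### Chebyshev-like sequences -/

noncomputable def cheb (t : ℝ) : ℕ → ℝ
  | 0 => 0
  | 1 => 1
  | (n+2) => t * cheb t (n+1) - cheb t n

@[simp] theorem cheb_zero (t : ℝ) : cheb t 0 = 0 := rfl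
@[simp] theorem cheb_one (t : ℝ) : cheb t 1 = 1 := rfl
theorem cheb_two_step (t : ℝ) (n : ℕ) : cheb t (n+2) = t * cheb t (n+1) - cheb t n := rfl

theorem cheb_nonneg_of_two_le {t : ℝ} (ht : 2 ≤ t) :
    ∀ k, 0 ≤ cheb t k ∧ cheb t k ≤ cheb t (k+1) := by
  intro k
  induction k with
  | zero => simp
  | succ n ih =>
    obtain ⟨h0, h1⟩ := ih
    have h2 : 0 ≤ cheb t (n+1) := le_trans h0 h1
    refine ⟨h2, ?_⟩
    rw [cheb_two_step]
    nlinarith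

theorem cheb_sin {m : ℕ} (hm : 2 ≤ m) :
    ∀ k : ℕ, cheb (2 * Real.cos (Real.pi / m)) k * Real.sin (Real.pi / m)
      = Real.sin (k * (Real.pi / m)) := by
  set θ := Real.pi / m
  intro k
  induction k using Nat.twoStepInduction with
  | zero => simp
  | one => simp
  | more n ih1 ih2 =>
    rw [cheb_two_step]
    have e1 : ((n + 2 : ℕ) : ℝ) * θ = ((n+1 : ℕ) : ℝ) * θ + θ := by push_cast; ring
    have e2 : ((n : ℕ) : ℝ) * θ = ((n+1 : ℕ) : ℝ) * θ - θ := by push_cast; ring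
    rw [e1, Real.sin_add, sub_mul, mul_assoc, ih2, ih1, e2, Real.sin_sub]
    ring

theorem cheb_nonneg_of_trig {m : ℕ} (hm : 2 ≤ m) {k : ℕ} (hk : k ≤ m) :
    0 ≤ cheb (2 * Real.cos (Real.pi / m)) k := by
  have hmpos : (0:ℝ) < m := by positivity
  have hθpos : 0 < Real.pi / m := by positivity
  have hm2 : (2:ℝ) ≤ (m:ℝ) := by exact_mod_cast hm
  have hθlt : Real.pi / m < Real.pi := by
    rw [div_lt_iff₀ hmpos]
    nlinarith [Real.pi_pos]
  have hsin : 0 < Real.sin (Real.pi / m) := Real.sin_pos_of_pos_of_lt_pi hθpos hθlt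
  have hkθ : 0 ≤ Real.sin (k * (Real.pi / m)) := by
    apply Real.sin_nonneg_of_nonneg_of_le_pi
    · positivity
    · calc (k : ℝ) * (Real.pi / m) ≤ m * (Real.pi / m) := by
            apply mul_le_mul_of_nonneg_right _ (le_of_lt hθpos)
            exact_mod_cast hk
        _ = Real.pi := by field_simp
  nlinarith [cheb_sin hm k]

theorem cheb_two_m {m : ℕ} (hm : 2 ≤ m) : cheb (2 * Real.cos (Real.pi / m)) (2*m) = 0 := by
  have hmne : (m:ℝ) ≠ 0 := by positivity
  have h := cheb_sin hm (2*m)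
  have e : ((2*m : ℕ) : ℝ) * (Real.pi / m) = 2 * Real.pi := by push_cast; field_simp
  rw [e] at h
  simp only [Real.sin_two_pi] at h
  have hmpos : (0:ℝ) < m := by positivity
  have hθpos : 0 < Real.pi / m := by positivity
  have hm2 : (2:ℝ) ≤ (m:ℝ) := by exact_mod_cast hm
  have hθlt : Real.pi / m < Real.pi := by
    rw [div_lt_iff₀ hmpos]
    nlinarith [Real.pi_pos]
  have hsin : 0 < Real.sin (Real.pi / m) := Real.sin_pos_of_pos_of_lt_pi hθpos hθlt
  nlinarith

theorem cheb_two_m_one {m : ℕ} (hm : 2 ≤ m) : cheb (2 * Real.cos (Real.pi / m)) (2*m+1) = 1 := by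
  have hmne : (m:ℝ) ≠ 0 := by positivity
  have h := cheb_sin hm (2*m+1)
  have e : ((2*m+1 : ℕ) : ℝ) * (Real.pi / m) = 2 * Real.pi + (Real.pi / m) := by
    push_cast; field_simp
  rw [e, show 2 * Real.pi + Real.pi / m = Real.pi / m + 2 * Real.pi from by ring,
    Real.sin_add_two_pi] at h
  have hmpos : (0:ℝ) < m := by positivity
  have hθpos : 0 < Real.pi / m := by positivity
  have hm2 : (2:ℝ) ≤ (m:ℝ) := by exact_mod_cast hm
  have hθlt : Real.pi / m < Real.pi := by
    rw [div_lt_iff₀ hmpos]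
    nlinarith [Real.pi_pos]
  have hsin : 0 < Real.sin (Real.pi / m) := Real.sin_pos_of_pos_of_lt_pi hθpos hθlt
  nlinarith

/-! ### alternating words in a group -/

variable {G : Type*} [Group G]

def rword (a b : G) : ℕ → G
  | 0 => 1
  | (k+1) => (if k % 2 = 0 then b else a) * rword a b k

@[simp] theorem rword_zero (a b : G) : rword a b 0 = 1 := rfl
theorem rword_succ (a b : G) (k : ℕ) :
    rword a b (k+1) = (if k % 2 = 0 then b else a) * rword a b k := rfl

theorem rword_even (a b : G) (j : ℕ) : rword a b (2*j) = (a*b)^j := by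
  induction j with
  | zero => simp
  | succ n ih =>
    have e1 : 2*(n+1) = (2*n+1)+1 := by ring
    rw [e1, rword_succ, rword_succ, ih]
    have h1 : (2*n+1) % 2 = 1 := by omega
    have h2 : (2*n) % 2 = 0 := by omega
    rw [h1, h2]
    norm_num
    rw [pow_succ', ← mul_assoc]

theorem rword_odd (a b : G) (j : ℕ) : rword a b (2*j+1) = b * (a*b)^j := by
  rw [rword_succ, rword_even]
  have : (2*j) % 2 = 0 := by omega
  rw [this, if_pos rfl]

theorem rword_word (a b : G) (k : ℕ) :
    ∃ l : List G, (∀ x ∈ l, x = a ∨ x = b) ∧ l.prod = rword a b k ∧ l.length = k := by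
  induction k with
  | zero => exact ⟨[], by simp, by simp, rfl⟩
  | succ n ih =>
    obtain ⟨l, hl, hp, hlen⟩ := ih
    refine ⟨(if n % 2 = 0 then b else a) :: l, ?_, by simp [rword_succ, hp], by simp [hlen]⟩
    intro x hx
    rcases List.mem_cons.1 hx with h | h
    · subst h; split <;> simp
    · exact hl x h

variable {G : Type*} [Group G]

section Identities
variable {a b : G}

theorem inv_of_invol {x : G} (hx : x * x = 1) : x⁻¹ = x := by
  calc x⁻¹ = x⁻¹ * (x * x) := by rw [hx, mul_one]
    _ = x := by group

theorem inv_ab_pow (ha : a * a = 1) (hb : b * b = 1) (j : ℕ) : ((a*b)^j)⁻¹ = (b*a)^j := by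
  rw [← inv_pow]
  congr 1
  rw [mul_inv_rev, inv_of_invol ha, inv_of_invol hb]

theorem ba_pow_mul_a (ha : a * a = 1) (j : ℕ) : (b*a)^j * a = a * (a*b)^j := by
  have ha' : ∀ x : G, a * (a * x) = x := fun x => by rw [← mul_assoc, ha, one_mul]
  induction j with
  | zero => simp
  | succ n ih =>
    calc (b*a)^(n+1) * a = (b*a) * ((b*a)^n * a) := by rw [pow_succ']; group
      _ = (b*a) * (a * (a*b)^n) := by rw [ih]
      _ = b * (a*b)^n := by rw [mul_assoc, ha']
      _ = a * (a*b)^(n+1) := by rw [pow_succ', ← mul_assoc, ha']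

theorem ba_pow_mul_b (hb : b * b = 1) (j : ℕ) : (b*a)^j * b = b * (a*b)^j := by
  induction j with
  | zero => simp
  | succ n ih =>
    calc (b*a)^(n+1) * b = (b*a) * ((b*a)^n * b) := by rw [pow_succ']; group
      _ = (b*a) * (b * (a*b)^n) := by rw [ih]
      _ = b * (a*b)^(n+1) := by rw [pow_succ']; simp only [mul_assoc]

theorem ab_pow_of_rel (ha : a * a = 1) (hb : b * b = 1) {m : ℕ} (hrel : (a*b)^m = 1)
    {j : ℕ} (hj : j ≤ m) : (a*b)^j = (b*a)^(m-j) := by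
  have h1 : (a*b)^j * (a*b)^(m-j) = 1 := by
    rw [← pow_add, Nat.add_sub_cancel' hj, hrel]
  calc (a*b)^j = (a*b)^j * ((a*b)^(m-j) * ((a*b)^(m-j))⁻¹) := by group
    _ = ((a*b)^j * (a*b)^(m-j)) * ((a*b)^(m-j))⁻¹ := by group
    _ = (b*a)^(m-j) := by rw [h1, one_mul, inv_ab_pow ha hb]

theorem b_ab_pow_of_rel (ha : a * a = 1) (hb : b * b = 1) {m : ℕ} (hrel : (a*b)^m = 1)
    {j : ℕ} (hj : j + 1 ≤ m) : b * (a*b)^j = a * (b*a)^(m-j-1) := by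
  have hb' : ∀ x : G, b * (b * x) = x := fun x => by rw [← mul_assoc, hb, one_mul]
  rw [ab_pow_of_rel ha hb hrel (le_trans (Nat.le_succ j) hj)]
  obtain ⟨i, hi⟩ : ∃ i, m - j - 1 = i := ⟨_, rfl⟩
  rw [hi, show m - j = i + 1 from by omega, pow_succ', ← mul_assoc, ← mul_assoc, hb, one_mul]

end Identities

section MinWord

variable {a b : G}

theorem shorten_of_not_chain (hS : ∀ s ∈ ({a, b} : Set G), s * s = 1) :
    ∀ l : List G, (∀ x ∈ l, x ∈ ({a, b} : Set G)) → ¬ l.Chain' (· ≠ ·) →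
      ∃ l' : List G, (∀ x ∈ l', x ∈ ({a, b} : Set G)) ∧ l'.prod = l.prod ∧
        l'.length + 2 = l.length := by
  intro l
  induction l with
  | nil => intro _ h; exact absurd List.isChain_nil h
  | cons x t ih =>
    intro hmem hnc
    match t, ih with
    | [], _ => exact absurd (List.isChain_singleton x) hnc
    | y :: t', ih =>
      by_cases hxy : x = y
      · refine ⟨t', fun z hz => hmem z (by simp [hz]), ?_, by simp⟩
        have hx : x * x = 1 := hS x (hmem x (by simp))
        subst hxy
        simp only [List.prod_cons, ← mul_assoc, hx, one_mul]
      · have hnc' : ¬ (y :: t').Chain' (· ≠ ·) := by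
          intro hc
          exact hnc (List.isChain_cons_cons.2 ⟨hxy, hc⟩)
        obtain ⟨l', h1, h2, h3⟩ := ih (fun z hz => hmem z (by simp [hz])) hnc'
        exact ⟨x :: l', fun z hz => by
          rcases List.mem_cons.1 hz with h | h
          exacts [h ▸ hmem x (by simp), h1 z h],
          by simp [h2], by simpa using h3⟩

theorem alt_word_eq (hne : a ≠ b) :
    ∀ l : List G, (∀ x ∈ l, x = a ∨ x = b) → l.Chain' (· ≠ ·) →
      (∀ h : l ≠ [], l.getLast h = b) →
      l.prod = rword a b l.length ∧
        (∀ h : l ≠ [], l.head h = if l.length % 2 = 1 then b else a) := by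
  intro l
  induction l with
  | nil => intro _ _ _; exact ⟨by simp, fun h => absurd rfl h⟩
  | cons x t ih =>
    intro hmem hch hlast
    match t, ih with
    | [], _ =>
      have hx : x = b := hlast (by simp)
      subst hx
      exact ⟨by simp [rword_succ], fun _ => by simp⟩
    | y :: t', ih =>
      have hch' : (y :: t').Chain' (· ≠ ·) := (List.isChain_cons_cons.1 hch).2
      have hxy : x ≠ y := (List.isChain_cons_cons.1 hch).1
      have hlast' : ∀ h : (y :: t') ≠ [], (y :: t').getLast h = b := by
        intro h
        rw [← List.getLast_cons (l := y :: t') h (a := x)]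
        exact hlast (by simp)
      obtain ⟨hprod, hhead⟩ := ih (fun z hz => hmem z (by simp [hz])) hch' hlast'
      have hyv : y = if (y :: t').length % 2 = 1 then b else a := by
        have := hhead (by simp)
        simpa using this
      have hxv : x = if (y :: t').length % 2 = 1 then a else b := by
        rcases Nat.mod_two_eq_zero_or_one (y :: t').length with hp | hp
        · have hy : y = a := by rw [hp] at hyv; simpa using hyv
        
          have hxa : x ≠ a := hy ▸ hxy
          rcases hmem x (by simp) with h | h
          · exact absurd h hxa
          · rw [hp]; simpa using h
        · have hy : y = b := by rw [hp] at hyv; simpa using hyv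
          have hxb : x ≠ b := hy ▸ hxy
          rcases hmem x (by simp) with h | h
          · rw [hp]; simpa using h
          · exact absurd h hxb
      constructor
      · show (x :: y :: t').prod = rword a b ((y :: t').length + 1)
        rw [rword_succ, ← hprod, List.prod_cons]
        congr 1
        rcases Nat.mod_two_eq_zero_or_one (y :: t').length with hp | hp
        · rw [hxv, hp]; simp
        · rw [hxv, hp]; simp
      · intro _
        show x = if ((y :: t').length + 1) % 2 = 1 then b else a
        rcases Nat.mod_two_eq_zero_or_one (y :: t').length with hp | hp
        · rw [hxv, hp]
          have : ((y :: t').length + 1) % 2 = 1 := by omega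
          rw [this]; simp
        · rw [hxv, hp]
          have : ((y :: t').length + 1) % 2 = 0 := by omega
          rw [this]; simp

/-- A group element admitting no shorter expression when multiplied by `a`
is an alternating word ending in `b`. -/
theorem eq_rword_of_min (hne : a ≠ b) (ha : a * a = 1) (hb : b * b = 1)
    {w : G} (hw : w ∈ Subgroup.closure ({a, b} : Set G))
    (hlen : wlen ({a, b} : Set G) w < wlen ({a, b} : Set G) (w * a)) :
    w = rword a b (wlen ({a, b} : Set G) w) := by
  have hS : ∀ s ∈ ({a, b} : Set G), s * s = 1 := by
    intro s hs; rcases hs with h | h <;> simp_all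
  obtain ⟨l, hl, hp, hlength⟩ := exists_min_word _ hS hw
  have hchain : l.Chain' (· ≠ ·) := by
    by_contra hnc
    obtain ⟨l', h1, h2, h3⟩ := shorten_of_not_chain hS l hl hnc
    have := wlen_le (S := ({a, b} : Set G)) h1 (h2.trans hp)
    omega
  have hlastb : ∀ h : l ≠ [], l.getLast h = b := by
    intro h
    rcases hl _ (List.getLast_mem h) with hx | hx
    · exfalso
      have hdrop : l.dropLast.prod = w * a := by
        have : l.dropLast.prod * a * a = w * a := by
          conv_rhs => rw [← hp, ← List.dropLast_append_getLast h]
          rw [List.prod_append, hx]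
          simp [mul_assoc]
        rw [mul_assoc, ha, mul_one] at this
        rw [this]
      have hlb := wlen_le (S := ({a, b} : Set G))
        (fun x hx' => hl x (List.dropLast_subset l hx')) hdrop
      have : l.dropLast.length = l.length - 1 := by simp
      omega
    · simpa using hx
  have halt := alt_word_eq hne l (fun x hx => by simpa using hl x hx) hchain hlastb
  calc w = l.prod := hp.symm
    _ = rword a b l.length := halt.1
    _ = rword a b (wlen ({a, b} : Set G) w) := by rw [hlength]

end MinWord

variable {V : Type*} [AddCommGroup V] [Module ℝ V]

theorem rword_len_le {G : Type*} [Group G] (a b : G) (n : ℕ) :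
    wlen ({a, b} : Set G) (rword a b n) ≤ n := by
  obtain ⟨l, hl, hp, hlen⟩ := rword_word a b n
  have := wlen_le (S := ({a, b} : Set G))
    (fun x hx => by rcases hl x hx with h | h <;> simp [h]) hp
  omega

theorem rword_len_le' {G : Type*} [Group G] (a b : G) (n : ℕ) :
    wlen ({a, b} : Set G) (rword b a n) ≤ n := by
  obtain ⟨l, hl, hp, hlen⟩ := rword_word b a n
  have := wlen_le (S := ({a, b} : Set G))
    (fun x hx => by rcases hl x hx with h | h <;> simp [h]) hp
  omega

theorem rword_apply_root (B : LinearMap.BilinForm ℝ V) (α β : V)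
    (hαα : B α α = 1) (hββ : B β β = 1) (c : ℝ) (hαβ : B α β = c) (hβα : B β α = c)
    (k : ℕ) :
    (rword (bref B α hαα) (bref B β hββ) k) α =
      (if k % 2 = 0 then cheb (-(2*c)) (k+1) else cheb (-(2*c)) k) • α +
      (if k % 2 = 0 then cheb (-(2*c)) k else cheb (-(2*c)) (k+1)) • β := by
  set a := bref B α hαα
  set b := bref B β hββ
  set t := -(2*c) with ht
  induction k with
  | zero => simp
  | succ n ih =>
    have hbα : b α = α + t • β := by
      rw [bref_apply B β hββ α, hαβ]; rw [ht]; module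
    have haβ : a β = β + t • α := by
      rw [bref_apply B α hαα β, hβα]; rw [ht]; module
    have haα : a α = -α := bref_apply_self B α hαα
    have hbβ : b β = -β := bref_apply_self B β hββ
    rw [rword_succ]
    rcases Nat.mod_two_eq_zero_or_one n with hp | hp
    · have hp1 : (n+1) % 2 = 1 := by omega
      simp only [hp, hp1, reduceIte] at ih ⊢
      norm_num at ih ⊢
      show b (rword a b n α) = _
      rw [ih, map_add, map_smul, map_smul, hbα, hbβ, cheb_two_step]
      module
    · have hp1 : (n+1) % 2 = 0 := by omega
      simp only [hp, hp1, reduceIte] at ih ⊢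
      norm_num at ih ⊢
      show a (rword a b n α) = _
      rw [ih, map_add, map_smul, map_smul, haα, haβ, cheb_two_step]
      module

theorem pow_fix {G : Type*} [Group G] {M : Type*} [MulAction G M] {u : G} {v : M}
    (h : u • v = v) : ∀ k : ℕ, (u^k) • v = v := by
  intro k
  induction k with
  | zero => simp
  | succ n ih => rw [pow_succ', mul_smul, ih, h]

theorem equiv_pow_fix {u : V ≃ₗ[ℝ] V} {v : V} (h : u v = v) (k : ℕ) : (u^k) v = v := by
  induction k with
  | zero => rfl
  | succ n ih =>
    have : (u^(n+1)) v = u ((u^n) v) := by rw [pow_succ']; rfl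
    rw [this, ih, h]

theorem ab_rel (B : LinearMap.BilinForm ℝ V) (α β : V)
    (hαα : B α α = 1) (hββ : B β β = 1) (c : ℝ) (hαβ : B α β = c) (hβα : B β α = c)
    (m : ℕ) (hm : 2 ≤ m) (hcm : c = -Real.cos (Real.pi / m)) :
    ((bref B α hαα) * (bref B β hββ))^m = 1 := by
  set a := bref B α hαα with hadef
  set b := bref B β hββ with hbdef
  have ha : a * a = 1 := bref_sq B α hαα
  have hb : b * b = 1 := bref_sq B β hββ
  have hct : -(2*c) = 2 * Real.cos (Real.pi / m) := by rw [hcm]; ring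
  have h1 : ((a*b)^m) α = α := by
    have := rword_apply_root B α β hαα hββ c hαβ hβα (2*m)
    rw [rword_even] at this
    have hp : (2*m) % 2 = 0 := by omega
    rw [hp] at this
    norm_num at this
    rw [this, hct, cheb_two_m hm, cheb_two_m_one hm]
    module
  have h2 : ((b*a)^m) β = β := by
    have := rword_apply_root B β α hββ hαα c hβα hαβ (2*m)
    rw [rword_even] at this
    have hp : (2*m) % 2 = 0 := by omega
    rw [hp] at this
    norm_num at this
    rw [this, hct, cheb_two_m hm, cheb_two_m_one hm]
    module
  have h3 : ((a*b)^m) β = β := by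
    have hinv : (a*b)^m = ((b*a)^m)⁻¹ := by
      rw [inv_ab_pow hb ha]
    rw [hinv]
    conv_lhs => rw [← h2]
    show (((b*a)^m)⁻¹ * (b*a)^m) β = β
    rw [inv_mul_cancel]
    rfl
  have h4 : ∀ v : V, B v α = 0 → B v β = 0 → ((a*b)^m) v = v := by
    intro v hvα hvβ
    have hav : a v = v := by rw [hadef, bref_apply, hvα]; module
    have hbv : b v = v := by rw [hbdef, bref_apply, hvβ]; module
    have habv : (a*b) v = v := by show a (b v) = v; rw [hbv, hav]
    exact equiv_pow_fix habv m
  have hsin : 0 < Real.sin (Real.pi / m) := by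
    have hmpos : (0:ℝ) < m := by positivity
    have hm2 : (2:ℝ) ≤ (m:ℝ) := by exact_mod_cast hm
    apply Real.sin_pos_of_pos_of_lt_pi (by positivity)
    rw [div_lt_iff₀ hmpos]
    nlinarith [Real.pi_pos]
  have hc2 : c^2 < 1 := by
    have := Real.sin_sq_add_cos_sq (Real.pi / m)
    rw [hcm]; nlinarith
  have hne1 : 1 - c^2 ≠ 0 := by nlinarith
  ext v
  set x := (B v α - c * B v β)/(1 - c^2) with hx
  set y := (B v β - c * B v α)/(1 - c^2) with hy
  set z := v - x • α - y • β with hz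
  have hzα : B z α = 0 := by
    rw [hz]
    simp only [map_sub, LinearMap.sub_apply, map_smul, LinearMap.smul_apply, smul_eq_mul,
      hαα, hβα]
    rw [hx, hy]
    field_simp
    ring
  have hzβ : B z β = 0 := by
    rw [hz]
    simp only [map_sub, LinearMap.sub_apply, map_smul, LinearMap.smul_apply, smul_eq_mul,
      hββ, hαβ]
    rw [hx, hy]
    field_simp
    ring
  have hdecomp : v = x • α + y • β + z := by rw [hz]; module
  show ((a*b)^m) v = v
  conv_lhs => rw [hdecomp]
  rw [map_add, map_add, map_smul, map_smul, h1, h3, h4 z hzα hzβ]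
  rw [hdecomp]

/-- The dihedral positivity lemma. -/
theorem dihedral_pos (B : LinearMap.BilinForm ℝ V) (α β : V)
    (hαα : B α α = 1) (hββ : B β β = 1) (c : ℝ) (hαβ : B α β = c) (hβα : B β α = c)
    (hne : bref B α hαα ≠ bref B β hββ)
    (hcase : (∃ m : ℕ, 2 ≤ m ∧ c = -Real.cos (Real.pi / m)) ∨ c ≤ -1)
    {w : V ≃ₗ[ℝ] V}
    (hw : w ∈ Subgroup.closure ({bref B α hαα, bref B β hββ} : Set (V ≃ₗ[ℝ] V)))
    (hlen : wlen ({bref B α hαα, bref B β hββ} : Set (V ≃ₗ[ℝ] V)) w <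
      wlen ({bref B α hαα, bref B β hββ} : Set (V ≃ₗ[ℝ] V)) (w * bref B α hαα)) :
    ∃ p q : ℝ, 0 ≤ p ∧ 0 ≤ q ∧ w α = p • α + q • β := by
  set a := bref B α hαα with hadef
  set b := bref B β hββ with hbdef
  have ha : a * a = 1 := bref_sq B α hαα
  have hb : b * b = 1 := bref_sq B β hββ
  set k := wlen ({a, b} : Set (V ≃ₗ[ℝ] V)) w with hk
  have hwr : w = rword a b k := eq_rword_of_min hne ha hb hw hlen
  set t := -(2*c) with ht
  have happ := rword_apply_root B α β hαα hββ c hαβ hβα k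
  suffices hcc : 0 ≤ cheb t k ∧ 0 ≤ cheb t (k+1) by
    refine ⟨_, _, ?_, ?_, hwr ▸ happ⟩ <;> split_ifs <;> tauto
  rcases hcase with ⟨m, hm, hcm⟩ | hcinf
  · -- finite order case
    have hct : t = 2 * Real.cos (Real.pi / m) := by rw [ht, hcm]; ring
    have hrel : (a*b)^m = 1 := ab_rel B α β hαα hββ c hαβ hβα m hm hcm
    -- k ≤ m - 1
    have hkm : k + 1 ≤ m := by
      by_contra hcon
      push_neg at hcon   -- m < k + 1, i.e. m ≤ k
      have hmk : m ≤ k := by omega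
      -- first: k ≤ m
      have hkm2 : k ≤ m := by
        by_contra hcon2
        push_neg at hcon2  -- m < k
        rcases Nat.even_or_odd k with ⟨j, hj⟩ | ⟨j, hj⟩
        · -- k = 2j
          have hwe : w = (a*b)^j := by rw [hwr, hj, show j + j = 2*j from by ring, rword_even]
          by_cases hjm : m ≤ j
          · obtain ⟨i, hi⟩ : ∃ i, j = m + i := ⟨j - m, by omega⟩
            have hred : w = (a*b)^i := by rw [hwe, hi, pow_add, hrel, one_mul]
            have hbnd := rword_len_le a b (2*i)
            rw [rword_even, ← hred] at hbnd
            omega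
          · have hred : w = (b*a)^(m-j) := by
              rw [hwe, ab_pow_of_rel ha hb hrel (by omega : j ≤ m)]
            have hbnd := rword_len_le' a b (2*(m-j))
            rw [rword_even, ← hred] at hbnd
            omega
        · -- k = 2j+1
          have hwe : w = b*(a*b)^j := by
            rw [hwr, hj, show 2*j + 1 = 2*j+1 from rfl, rword_odd]
          by_cases hjm : m ≤ j
          · obtain ⟨i, hi⟩ : ∃ i, j = m + i := ⟨j - m, by omega⟩
            have hred : w = b*(a*b)^i := by rw [hwe, hi, pow_add, hrel, one_mul]
            have hbnd := rword_len_le a b (2*i+1)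
            rw [rword_odd, ← hred] at hbnd
            omega
          · have hred : w = a*(b*a)^(m-j-1) := by
              rw [hwe, b_ab_pow_of_rel ha hb hrel (by omega : j + 1 ≤ m)]
            have hbnd := rword_len_le' a b (2*(m-j-1)+1)
            rw [rword_odd, ← hred] at hbnd
            omega
      -- so k = m; derive contradiction with hlen
      have hkem : k = m := by omega
      rcases Nat.even_or_odd m with ⟨j, hj⟩ | ⟨j, hj⟩
      · -- m = 2j even
        have hj1 : 1 ≤ j := by omega
        have hwe : w = (a*b)^j := by
          rw [hwr, hkem, hj, show j + j = 2*j from by ring, rword_even]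
        have hwe2 : w = (b*a)^j := by
          rw [hwe, ab_pow_of_rel ha hb hrel (by omega : j ≤ m), show m - j = j from by omega]
        obtain ⟨i, hi⟩ : ∃ i, j = i + 1 := ⟨j - 1, by omega⟩
        have hwa : w * a = b * (a*b)^i := by
          rw [hwe2, hi, pow_succ, mul_assoc, mul_assoc, ha, mul_one, ba_pow_mul_b hb]
        have hble := rword_len_le a b (2*i+1)
        rw [rword_odd, ← hwa] at hble
        omega
      · -- m = 2j+1 odd
        have hwe : w = b*(a*b)^j := by
          rw [hwr, hkem, hj, rword_odd]
        have hwe2 : w = a*(b*a)^j := by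
          rw [hwe, b_ab_pow_of_rel ha hb hrel (by omega : j + 1 ≤ m),
            show m - j - 1 = j from by omega]
        have hwa : w * a = (a*b)^j := by
          rw [hwe2, mul_assoc, ba_pow_mul_a ha, ← mul_assoc, ha, one_mul]
        have hble := rword_len_le a b (2*j)
        rw [rword_even, ← hwa] at hble
        omega
    constructor
    · rw [hct]; exact cheb_nonneg_of_trig hm (by omega)
    · rw [hct]; exact cheb_nonneg_of_trig hm hkm
  · -- infinite case
    have ht2 : 2 ≤ t := by rw [ht]; linarith
    exact ⟨(cheb_nonneg_of_two_le ht2 k).1, (cheb_nonneg_of_two_le ht2 (k+1)).1⟩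

open Set Pointwise



variable {V : Type*} [AddCommGroup V] [Module ℝ V]

/-! ### cone lemmas -/

theorem zero_mem_cone (X : Set V) : (0 : V) ∈ cone X :=
  ⟨0, fun i => i.elim0, fun i => i.elim0, fun i => i.elim0, fun i => i.elim0, by simp⟩

theorem mem_cone_of_mem {X : Set V} {x : V} (hx : x ∈ X) : x ∈ cone X :=
  ⟨1, fun _ => 1, fun _ => x, fun _ => zero_le_one, fun _ => hx, by simp⟩

theorem smul_add_smul_mem_cone {X : Set V} {x y : V} (hx : x ∈ cone X) (hy : y ∈ cone X)
    {p q : ℝ} (hp : 0 ≤ p) (hq : 0 ≤ q) : p • x + q • y ∈ cone X := by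
  obtain ⟨n, c, xs, hc, hxs, rfl⟩ := hx
  obtain ⟨n', c', xs', hc', hxs', rfl⟩ := hy
  refine ⟨n + n', Fin.addCases (fun i => p * c i) (fun i => q * c' i),
    Fin.addCases xs xs', ?_, ?_, ?_⟩
  · intro i
    refine Fin.addCases (fun i => ?_) (fun i => ?_) i <;> simp only [Fin.addCases_left,
      Fin.addCases_right]
    exacts [mul_nonneg hp (hc i), mul_nonneg hq (hc' i)]
  · intro i
    refine Fin.addCases (fun i => ?_) (fun i => ?_) i <;> simp only [Fin.addCases_left,
      Fin.addCases_right]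
    exacts [hxs i, hxs' i]
  · rw [Fin.sum_univ_add]
    simp only [Fin.addCases_left, Fin.addCases_right]
    rw [Finset.smul_sum, Finset.smul_sum]
    congr 1 <;> (apply Finset.sum_congr rfl; intro i _; rw [smul_smul])

/-- Representation of a cone element by coefficients over a finite ground set. -/
theorem cone_rep {X : Set V} (hX : X.Finite) {x : V} (hx : x ∈ cone X) :
    ∃ f : V → ℝ, (∀ v, 0 ≤ f v) ∧ x = ∑ v ∈ hX.toFinset, f v • v := by
  classical
  obtain ⟨n, c, xs, hc, hxs, rfl⟩ := hx
  refine ⟨fun v => ∑ i ∈ Finset.univ.filter (fun i => xs i = v), c i,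
    fun v => Finset.sum_nonneg fun i _ => hc i, ?_⟩
  rw [← Finset.sum_fiberwise_of_maps_to (g := xs) (t := hX.toFinset)
    (fun i _ => hX.mem_toFinset.2 (hxs i)) (fun i => c i • xs i)]
  apply Finset.sum_congr rfl
  intro v _
  rw [Finset.sum_smul]
  apply Finset.sum_congr rfl
  intro i hi
  rw [(Finset.mem_filter.1 hi).2]

theorem eq_zero_of_mem_cone_both {B : LinearMap.BilinForm ℝ V} {Δ : Set V}
    (hbrs : IsBasedRootSystem B Δ) {x : V} (h1 : x ∈ cone Δ) (h2 : -x ∈ cone Δ) :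
    x = 0 := by
  classical
  haveI := hbrs.finite.fintype
  obtain ⟨f, hf, hfx⟩ := cone_rep hbrs.finite h1
  obtain ⟨g, hg, hgx⟩ := cone_rep hbrs.finite h2
  have hsum : ∑ v ∈ hbrs.finite.toFinset, (f v + g v) • v = 0 := by
    have : ∑ v ∈ hbrs.finite.toFinset, (f v + g v) • v
        = (∑ v ∈ hbrs.finite.toFinset, f v • v) + ∑ v ∈ hbrs.finite.toFinset, g v • v := by
      rw [← Finset.sum_add_distrib]
      apply Finset.sum_congr rfl
      intro v _
      rw [add_smul]
    rw [this, ← hfx, ← hgx]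
    simp
  have hsub : ∑ i : Δ, (f i + g i) • (i : V) = 0 := by
    rw [← Finset.sum_subtype hbrs.finite.toFinset (fun v => hbrs.finite.mem_toFinset)
      (fun v => (f v + g v) • v)]
    exact hsum
  have hzero : ∀ i : Δ, f i + g i = 0 :=
    Fintype.linearIndependent_iff.1 hbrs.indep (fun i : Δ => f i + g i) hsub
  have hf0 : ∀ v ∈ hbrs.finite.toFinset, f v • v = (0:ℝ) • v := by
    intro v hv
    have hvΔ : v ∈ Δ := hbrs.finite.mem_toFinset.1 hv
    have := hzero ⟨v, hvΔ⟩
    simp only at this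
    have hfv : f v = 0 := by have := hf v; have := hg v; linarith
    rw [hfv]
  rw [hfx]
  rw [Finset.sum_congr rfl hf0]
  simp

/-- Distinct simple roots give distinct reflections. -/
theorem bref_ne {B : LinearMap.BilinForm ℝ V} {Δ : Set V}
    (hbrs : IsBasedRootSystem B Δ) {α β : V} (hα : α ∈ Δ) (hβ : β ∈ Δ) (hne : α ≠ β)
    (h1 : B α α = 1) (h2 : B β β = 1) : bref B α h1 ≠ bref B β h2 := by
  intro heq
  have happ : bref B α h1 α = bref B β h2 α := by rw [heq]
  rw [bref_apply_self, bref_apply] at happ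
  -- happ : -α = α - (2 * B α β) • β
  have h0 : (2:ℝ) • α - (2 * B α β) • β = 0 := by
    calc (2:ℝ) • α - (2 * B α β) • β = (α - (2 * B α β) • β) - (-α) := by module
      _ = (α - (2 * B α β) • β) - (α - (2 * B α β) • β) := by rw [← happ]
      _ = 0 := sub_self _
  have hαc : α = (B α β) • β := by
    calc α = (1/2 : ℝ) • ((2:ℝ) • α - (2 * B α β) • β) + (B α β) • β := by module
      _ = (B α β) • β := by rw [h0, smul_zero, zero_add]
  have g : Fin 2 → ↥Δ := ![⟨α, hα⟩, ⟨β, hβ⟩]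
  have hginj : Function.Injective ![(⟨α, hα⟩ : ↥Δ), ⟨β, hβ⟩] := by
    intro i j hij
    fin_cases i <;> fin_cases j
    · rfl
    · simp only [Matrix.cons_val_zero, Matrix.cons_val_one, Matrix.head_cons, Fin.mk_zero,
        Fin.mk_one] at hij
      exact absurd (congrArg Subtype.val hij) hne
    · simp only [Matrix.cons_val_zero, Matrix.cons_val_one, Matrix.head_cons, Fin.mk_zero,
        Fin.mk_one] at hij
      exact absurd (congrArg Subtype.val hij).symm hne
    · rfl
  have hli : LinearIndependent ℝ (Subtype.val ∘ ![(⟨α, hα⟩ : ↥Δ), ⟨β, hβ⟩]) :=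
    hbrs.indep.comp _ hginj
  have hli2 : LinearIndependent ℝ ![α, β] := by
    have hfe : Subtype.val ∘ ![(⟨α, hα⟩ : ↥Δ), ⟨β, hβ⟩] = ![α, β] := by
      funext i
      fin_cases i <;> rfl
    rwa [hfe] at hli
  exact (linearIndependent_fin2.1 hli2).2 (B α β) hαc.symm

open Set Pointwise



variable {G : Type*} [Group G]

theorem exists_gen_shorter (S : Set G) (hS : ∀ s ∈ S, s * s = 1) {w : G}
    (hw : w ∈ Subgroup.closure S) (h0 : wlen S w ≠ 0) :
    ∃ s ∈ S, wlen S (w * s) < wlen S w := by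
  obtain ⟨l, hl, hp, hlen⟩ := exists_min_word S hS hw
  have hlne : l ≠ [] := by
    intro h
    rw [h] at hlen
    simp at hlen
    omega
  set s := l.getLast hlne with hs
  have hsS : s ∈ S := hl s (List.getLast_mem hlne)
  refine ⟨s, hsS, ?_⟩
  have hws : w * s = l.dropLast.prod := by
    have hsplit : l.dropLast.prod * s = w := by
      conv_rhs => rw [← hp, ← List.dropLast_append_getLast hlne]
      rw [List.prod_append]
      simp [hs]
    rw [← hsplit, mul_assoc, hS s hsS, mul_one]
  have hb := wlen_le (S := S) (fun x hx => hl x (List.dropLast_subset l hx)) hws.symm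
  have : l.dropLast.length = l.length - 1 := by simp
  omega

variable {V : Type*} [AddCommGroup V] [Module ℝ V]

theorem simple_eq_bref {B : LinearMap.BilinForm ℝ V} {Δ : Set V}
    (hbrs : IsBasedRootSystem B Δ) {g : V ≃ₗ[ℝ] V} (hg : g ∈ simpleReflections B Δ) :
    ∃ α, ∃ h : α ∈ Δ, g = bref B α (hbrs.diag_one α h) := by
  obtain ⟨α, hα, hform⟩ := hg
  refine ⟨α, hα, ?_⟩
  apply LinearEquiv.toLinearMap_injective
  apply LinearMap.ext
  intro v
  show g v = bref B α (hbrs.diag_one α hα) v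
  rw [hform v, bref_apply]

theorem bref_mem_simple {B : LinearMap.BilinForm ℝ V} {Δ : Set V}
    (hbrs : IsBasedRootSystem B Δ) {α : V} (hα : α ∈ Δ) :
    bref B α (hbrs.diag_one α hα) ∈ simpleReflections B Δ :=
  ⟨α, hα, fun v => bref_apply B α _ v⟩

theorem simple_invol {B : LinearMap.BilinForm ℝ V} {Δ : Set V}
    (hbrs : IsBasedRootSystem B Δ) :
    ∀ s ∈ simpleReflections B Δ, s * s = 1 := by
  intro s hs
  obtain ⟨α, hα, rfl⟩ := simple_eq_bref hbrs hs
  exact bref_sq B α _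

theorem simple_det [FiniteDimensional ℝ V] {B : LinearMap.BilinForm ℝ V} {Δ : Set V}
    (hbrs : IsBasedRootSystem B Δ) :
    ∀ s ∈ simpleReflections B Δ, LinearEquiv.det s = -1 := by
  intro s hs
  obtain ⟨α, hα, hform⟩ := hs
  exact det_of_reflection B α (hbrs.diag_one α hα) s hform

/-- Main positivity theorem: if `ℓ(w sα) > ℓ(w)` then `w α` is a nonnegative
combination of simple roots. -/
theorem main_pos [FiniteDimensional ℝ V] {B : LinearMap.BilinForm ℝ V} {Δ : Set V}
    (hbrs : IsBasedRootSystem B Δ) :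
    ∀ n : ℕ, ∀ w : V ≃ₗ[ℝ] V, w ∈ weylGroup B Δ →
      wlen (simpleReflections B Δ) w ≤ n →
      ∀ α, ∀ hα : α ∈ Δ,
        wlen (simpleReflections B Δ) w <
          wlen (simpleReflections B Δ) (w * bref B α (hbrs.diag_one α hα)) →
        w α ∈ cone Δ := by
  set S := simpleReflections B Δ with hSdef
  have hSinv : ∀ s ∈ S, s * s = 1 := simple_invol hbrs
  have hSdet : ∀ s ∈ S, LinearEquiv.det s = -1 := simple_det hbrs
  intro n
  induction n using Nat.strong_induction_on with
  | _ n ih =>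
    intro w hw hn α hα hup
    have hw' : w ∈ Subgroup.closure S := hw
    by_cases h0 : wlen S w = 0
    · have : w = 1 := eq_one_of_wlen_zero S hSinv hw' h0
      rw [this]
      show α ∈ cone Δ
      exact mem_cone_of_mem hα
    -- pick β with ℓ(w sβ) < ℓ(w)
    obtain ⟨s, hsS, hsdown⟩ := exists_gen_shorter S hSinv hw' h0
    obtain ⟨β, hβ, rfl⟩ := simple_eq_bref hbrs hsS
    set sa := bref B α (hbrs.diag_one α hα) with hsa
    set sb := bref B β (hbrs.diag_one β hβ) with hsb
    have hsaS : sa ∈ S := bref_mem_simple hbrs hα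
    have hsbS : sb ∈ S := bref_mem_simple hbrs hβ
    have hαβne : α ≠ β := by
      intro h
      subst h
      have : sa = sb := rfl
      rw [← this] at hsdown
      omega
    set I := ({sa, sb} : Set (V ≃ₗ[ℝ] V)) with hIdef
    have hIS : I ⊆ S := by
      intro x hx
      rcases hx with h | h
      · rw [h]; exact hsaS
      · rw [Set.mem_singleton_iff.1 h]; exact hsbS
    have hIinv : ∀ s ∈ I, s * s = 1 := fun s hs => hSinv s (hIS hs)
    have hIdet : ∀ s ∈ I, LinearEquiv.det s = -1 := fun s hs => hSdet s (hIS hs)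
    have hsaI : sa ∈ I := by left; rfl
    have hsbI : sb ∈ I := by right; rfl
    -- the set of candidate lengths
    set P : ℕ → Prop := fun k => ∃ v : V ≃ₗ[ℝ] V,
      (v ∈ Subgroup.closure S ∧ v⁻¹ * w ∈ Subgroup.closure I ∧
        wlen S v + wlen I (v⁻¹ * w) = wlen S w) ∧ wlen S v = k with hPdef
    have hlow : ∀ v : V ≃ₗ[ℝ] V, v ∈ Subgroup.closure S → v⁻¹ * w ∈ Subgroup.closure I →
        wlen S w ≤ wlen S v + wlen I (v⁻¹ * w) := by
      intro v hv hvt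
      have := wlen_mul_le_add hIS hSinv hv hvt
      rwa [mul_inv_cancel_left] at this
    have hsb1 : wlen I sb = 1 := by
      have hle : wlen I sb ≤ 1 := by
        have := wlen_le (S := I) (w := sb) (l := [sb]) (by simp [hsbI]) (by simp)
        simpa using this
      have hne0 : wlen I sb ≠ 0 := by
        intro h
        have : sb = 1 := eq_one_of_wlen_zero I hIinv (Subgroup.subset_closure hsbI) h
        have hβval : sb β = β := by rw [this]; rfl
        rw [hsb, bref_apply_self] at hβval
        have hβ0 : β = 0 := by
          have h2 : (2:ℝ) • β = 0 := by
            calc (2:ℝ) • β = β + β := two_smul ℝ β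
              _ = -β + β := by rw [hβval]
              _ = 0 := neg_add_cancel β
          rcases smul_eq_zero.1 h2 with h | h
          · norm_num at h
          · exact h
        have := hbrs.diag_one β hβ
        rw [hβ0] at this
        simp at this
      omega
    have hv₀mem : P (wlen S (w * sb)) := by
      refine ⟨w * sb, ⟨mul_mem hw' (Subgroup.subset_closure hsbS), ?_, ?_⟩, rfl⟩
      · have : (w * sb)⁻¹ * w = sb := by
          rw [mul_inv_rev, inv_of_invol (hSinv sb hsbS)]
          group
        rw [this]
        exact Subgroup.subset_closure hsbI
      · have he : (w * sb)⁻¹ * w = sb := by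
          rw [mul_inv_rev, inv_of_invol (hSinv sb hsbS)]
          group
        rw [he, hsb1]
        have := wlen_le_mul_add S hSinv hw' hsbS
        omega
    -- choose minimal
    have hPne : {k | P k}.Nonempty := ⟨_, hv₀mem⟩
    obtain ⟨v, ⟨hvW, hvtI, hvsum⟩, hvlen⟩ := Nat.sInf_mem hPne
    have hvmin : ∀ k, P k → sInf {k | P k} ≤ k := fun k hk => Nat.sInf_le hk
    set t := v⁻¹ * w with htdef
    have hwvt : w = v * t := by rw [htdef, mul_inv_cancel_left]
    have hvlt : wlen S v < wlen S w := by
      have h1 := hvmin _ hv₀mem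
      omega
    -- claim: ℓ(v sα) > ℓ(v) and ℓ(v sβ) > ℓ(v)
    have hclaim : ∀ sc, sc ∈ I → wlen S v < wlen S (v * sc) := by
      intro sc hscI
      have hscS : sc ∈ S := hIS hscI
      by_contra hcon
      push_neg at hcon
      have hne := wlen_mul_ne LinearEquiv.det hSinv hSdet hvW hscS
      have hlt : wlen S (v * sc) < wlen S v := by omega
      have hv' : (v * sc) ∈ Subgroup.closure S := mul_mem hvW (Subgroup.subset_closure hscS)
      have ht' : (v * sc)⁻¹ * w ∈ Subgroup.closure I := by
        have he : (v * sc)⁻¹ * w = sc * t := by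
          rw [mul_inv_rev, inv_of_invol (hIinv sc hscI), htdef]
          group
        rw [he]
        exact mul_mem (Subgroup.subset_closure hscI) hvtI
      have hsum' : wlen S (v * sc) + wlen I ((v * sc)⁻¹ * w) = wlen S w := by
        have he : (v * sc)⁻¹ * w = sc * t := by
          rw [mul_inv_rev, inv_of_invol (hIinv sc hscI), htdef]
          group
        have hb1 : wlen I (sc * t) ≤ wlen I t + 1 := wlen_smul_le I hIinv hvtI hscI
        have hb2 := hlow (v * sc) hv' ht'
        rw [he] at *
        omega
      have : P (wlen S (v * sc)) := ⟨v * sc, ⟨hv', ht', hsum'⟩, rfl⟩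
      have := hvmin _ this
      omega
    -- ih applies to v
    have hvα : v α ∈ cone Δ := by
      apply ih (wlen S v) (by omega) v hvW le_rfl α hα
      exact hclaim sa hsaI
    have hvβ : v β ∈ cone Δ := by
      apply ih (wlen S v) (by omega) v hvW le_rfl β hβ
      exact hclaim sb hsbI
    -- claim: ℓ_I(t sα) > ℓ_I(t)
    have htlen : wlen I t < wlen I (t * sa) := by
      by_contra hcon
      push_neg at hcon
      have hne := wlen_mul_ne LinearEquiv.det hIinv hIdet hvtI hsaI
      have hlt : wlen I (t * sa) < wlen I t := by omega
      have hwsa : w * sa = v * (t * sa) := by rw [hwvt]; group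
      have hb := wlen_mul_le_add hIS hSinv hvW
        (mul_mem hvtI (Subgroup.subset_closure hsaI))
      rw [← hwsa] at hb
      omega
    -- dihedral positivity
    obtain ⟨p, q, hp, hq, htα⟩ := dihedral_pos B α β (hbrs.diag_one α hα) (hbrs.diag_one β hβ)
      (B α β) rfl (hbrs.symm β α) (bref_ne hbrs hα hβ hαβne _ _)
      (hbrs.offdiag α hα β hβ hαβne) hvtI htlen
    have : w α = p • (v α) + q • (v β) := by
      rw [hwvt]
      show v (t α) = _
      rw [htα, map_add, map_smul, map_smul]
    rw [this]
    exact smul_add_smul_mem_cone hvα hvβ hp hq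

open Set Pointwise



variable {V : Type*} [AddCommGroup V] [Module ℝ V]

theorem root_pm [FiniteDimensional ℝ V] {B : LinearMap.BilinForm ℝ V} {Δ : Set V}
    (hbrs : IsBasedRootSystem B Δ) {w : V ≃ₗ[ℝ] V} (hw : w ∈ weylGroup B Δ)
    {α : V} (hα : α ∈ Δ) : w α ∈ cone Δ ∨ -(w α) ∈ cone Δ := by
  set S := simpleReflections B Δ with hSdef
  have hSinv : ∀ s ∈ S, s * s = 1 := simple_invol hbrs
  have hSdet : ∀ s ∈ S, LinearEquiv.det s = -1 := simple_det hbrs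
  set sa := bref B α (hbrs.diag_one α hα) with hsa
  have hsaS : sa ∈ S := bref_mem_simple hbrs hα
  have hw' : w ∈ Subgroup.closure S := hw
  have hne := wlen_mul_ne LinearEquiv.det hSinv hSdet hw' hsaS
  by_cases hcmp : wlen S w < wlen S (w * sa)
  · left
    exact main_pos hbrs (wlen S w) w hw le_rfl α hα hcmp
  · right
    have hlt : wlen S (w * sa) < wlen S w := by omega
    have hw2 : w * sa ∈ weylGroup B Δ := mul_mem hw (Subgroup.subset_closure hsaS)
    have hcancel : (w * sa) * sa = w := by
      rw [mul_assoc, bref_sq, mul_one]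
    have hlt2 : wlen S (w * sa) < wlen S ((w * sa) * sa) := by rw [hcancel]; omega
    have hpos := main_pos hbrs (wlen S (w * sa)) (w * sa) hw2 le_rfl α hα hlt2
    have : (w * sa) α = -(w α) := by
      show w (sa α) = -(w α)
      rw [hsa, bref_apply_self, map_neg]
    rwa [this] at hpos

theorem neg_mem_rootSystem {B : LinearMap.BilinForm ℝ V} {Δ : Set V}
    (hbrs : IsBasedRootSystem B Δ) {x : V} (hx : x ∈ rootSystem B Δ) :
    -x ∈ rootSystem B Δ := by
  obtain ⟨w, hw, α, hα, rfl⟩ := hx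
  set sa := bref B α (hbrs.diag_one α hα) with hsa
  refine ⟨w * sa, mul_mem hw (Subgroup.subset_closure (bref_mem_simple hbrs hα)), α, hα, ?_⟩
  show -(w α) = w (sa α)
  rw [hsa, bref_apply_self, map_neg]

theorem smul_mem_rootSystem {B : LinearMap.BilinForm ℝ V} {Δ : Set V}
    {w : V ≃ₗ[ℝ] V} (hw : w ∈ weylGroup B Δ) {x : V} (hx : x ∈ rootSystem B Δ) :
    w x ∈ rootSystem B Δ := by
  obtain ⟨u, hu, α, hα, rfl⟩ := hx
  exact ⟨w * u, mul_mem hw hu, α, hα, rfl⟩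

theorem zero_not_mem_rootSystem {B : LinearMap.BilinForm ℝ V} {Δ : Set V}
    (hbrs : IsBasedRootSystem B Δ) : (0 : V) ∉ rootSystem B Δ := by
  rintro ⟨w, hw, α, hα, h0⟩
  have hα0 : α = 0 := by
    have : w α = w 0 := by rw [map_zero, ← h0]
    exact w.injective this
  have := hbrs.diag_one α hα
  rw [hα0] at this
  simp at this

theorem root_dichot [FiniteDimensional ℝ V] {B : LinearMap.BilinForm ℝ V} {Δ : Set V}
    (hbrs : IsBasedRootSystem B Δ) {x : V} (hx : x ∈ rootSystem B Δ) :
    x ∈ positiveRoots B Δ ∨ -x ∈ positiveRoots B Δ := by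
  obtain ⟨w, hw, α, hα, rfl⟩ := hx
  rcases root_pm hbrs hw hα with h | h
  · exact Or.inl ⟨⟨w, hw, α, hα, rfl⟩, h⟩
  · exact Or.inr ⟨neg_mem_rootSystem hbrs ⟨w, hw, α, hα, rfl⟩, h⟩

theorem pos_asym {B : LinearMap.BilinForm ℝ V} {Δ : Set V}
    (hbrs : IsBasedRootSystem B Δ) {x : V} (hx : x ∈ positiveRoots B Δ) :
    -x ∉ positiveRoots B Δ := by
  rintro ⟨hroot, hcone⟩
  have hx0 : x = 0 := eq_zero_of_mem_cone_both hbrs hx.2 hcone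
  exact zero_not_mem_rootSystem hbrs (hx0 ▸ hx.1)

/-- `Φ⁺` is a tope. -/
theorem pos_tope [FiniteDimensional ℝ V] {B : LinearMap.BilinForm ℝ V} {Δ : Set V}
    (hbrs : IsBasedRootSystem B Δ) {d : Set V → Set V} (hd : IsOMRS B Δ d) :
    IsTope (rootSystem B Δ) d (positiveRoots B Δ) := by
  refine ⟨fun x hx => hx.1, ?_, fun x hx => pos_asym hbrs hx, ?_⟩
  · rw [hd.positive_closed]
  · intro R' hR'E hR'cl hR'asym hsub
    apply Set.Subset.antisymm _ hsub
    intro x hx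
    rcases root_dichot hbrs (hR'E hx) with h | h
    · exact h
    · exact absurd (hsub h) (by simpa using hR'asym x hx)

theorem wPositiveRoots_isTope_aux [FiniteDimensional ℝ V]
    (B : LinearMap.BilinForm ℝ V) (Δ : Set V)
    (hbrs : IsBasedRootSystem B Δ)
    (d : Set V → Set V) (hd : IsOMRS B Δ d) :
    (∀ w ∈ weylGroup B Δ, IsTope (rootSystem B Δ) d (⇑w '' positiveRoots B Δ)) ∧
      IsTope (rootSystem B Δ) d (positiveRoots B Δ) := by
  have hpos_sub : positiveRoots B Δ ⊆ rootSystem B Δ := fun x hx => hx.1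
  constructor
  · intro w hw
    have hcan2 : ∀ z : V, (⇑(w⁻¹)) (w z) = z := by
      intro z
      show (w⁻¹ * w) z = z
      rw [inv_mul_cancel]
      rfl
    have hcan1 : ∀ z : V, w ((⇑(w⁻¹)) z) = z := by
      intro z
      show (w * w⁻¹) z = z
      rw [mul_inv_cancel]
      rfl
    refine ⟨?_, ?_, ?_, ?_⟩
    · rintro x ⟨y, hy, rfl⟩
      exact smul_mem_rootSystem hw (hpos_sub hy)
    · rw [hd.equivariant w hw _ hpos_sub, hd.positive_closed]
    · rintro x ⟨y, hy, rfl⟩ ⟨y', hy', hyy'⟩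
      have : w y' = w (-y) := by rw [hyy', map_neg]
      have hy'e : y' = -y := w.injective this
      rw [hy'e] at hy'
      exact pos_asym hbrs hy hy'
    · intro R' hR'E hR'cl hR'asym hsub
      set R'' := ⇑(w⁻¹) '' R' with hR''
      have hR''E : R'' ⊆ rootSystem B Δ := by
        rintro x ⟨y, hy, rfl⟩
        exact smul_mem_rootSystem (inv_mem hw) (hR'E hy)
      have hR''cl : d R'' ⊆ R'' := by
        rw [hR'', hd.equivariant w⁻¹ (inv_mem hw) R' hR'E]
        exact Set.image_mono hR'cl
      have hR''asym : ∀ x ∈ R'', -x ∉ R'' := by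
        rintro x ⟨y, hy, rfl⟩ ⟨y', hy', hyy'⟩
        have : (⇑(w⁻¹)) y' = (⇑(w⁻¹)) (-y) := by rw [hyy', map_neg]
        have hy'e : y' = -y := (w⁻¹ : V ≃ₗ[ℝ] V).injective this
        rw [hy'e] at hy'
        exact hR'asym (-y) hy' (by simpa using hy)
      have hsub'' : positiveRoots B Δ ⊆ R'' := by
        intro y hy
        exact ⟨w y, hsub ⟨y, hy, rfl⟩, hcan2 y⟩
      have hR''eq : R'' = positiveRoots B Δ :=
        (pos_tope hbrs hd).2.2.2 R'' hR''E hR''cl hR''asym hsub''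
      have : ⇑w '' R'' = R' := by
        ext z
        constructor
        · rintro ⟨y, ⟨y', hy', rfl⟩, rfl⟩
          rwa [hcan1]
        · intro hz
          exact ⟨(⇑(w⁻¹)) z, ⟨z, hz, rfl⟩, hcan1 z⟩
      rw [← this, hR''eq]
  · exact pos_tope hbrs hd

end OMRSAux

/-- for any based root system and any OMRS `d` on `(Φ, Φ⁺)`, each set
`w·Φ⁺` for `w ∈ W` is a tope of `d`; in particular `Φ⁺` itself is a tope. -/
theorem wPositiveRoots_isTope [FiniteDimensional ℝ V]
    (B : LinearMap.BilinForm ℝ V) (Δ : Set V)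
    (hbrs : IsBasedRootSystem B Δ)
    (d : Set V → Set V) (hd : IsOMRS B Δ d) :
    (∀ w ∈ weylGroup B Δ, IsTope (rootSystem B Δ) d (⇑w '' positiveRoots B Δ)) ∧
      IsTope (rootSystem B Δ) d (positiveRoots B Δ) :=
  OMRSAux.wPositiveRoots_isTope_aux B Δ hbrs d hd
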